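/- Let λ > 0, r > 0 and let n₀ ≥ 0 be a natural number. Let (I_n)_{n≥1} be i.i.d. exponential random variables with rate λ, and let (N_n)_{n≥1} be i.i.d. random variables with P(N_n > m) = (1 - e^{-λ r})^m for every m ≥ 0 (cluster-size distribution), independent of (I_n). Let M = inf{n ≥ 1 : N_n > n₀} and B = Σ_{i=1}^{M-1} I_i. Then E[B] = (1/λ) · ((1 - e^{-λ r})^{-n₀} - 1). -/

import Mathlib

open MeasureTheory ProbabilityTheory Real

lemma expMeasure_Iio_zero (lam : ℝ) : expMeasure lam (Set.Iio 0) = 0 := by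
  rw [expMeasure, gammaMeasure, withDensity_apply _ measurableSet_Iio]
  exact lintegral_gammaPDF_of_nonpos le_rfl

lemma lintegral_id_expMeasure {lam : ℝ} (hlam : 0 < lam) :
    ∫⁻ x, ENNReal.ofReal x ∂(expMeasure lam) = ENNReal.ofReal (1 / lam) := by
  rw [expMeasure, gammaMeasure,
    lintegral_withDensity_eq_lintegral_mul _
      (f := gammaPDF 1 lam) (measurable_gammaPDFReal 1 lam).ennreal_ofReal ENNReal.measurable_ofReal]
  have hpt : ∀ x : ℝ, (gammaPDF 1 lam * fun x => ENNReal.ofReal x) x =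
      (Set.Ioi (0:ℝ)).indicator (fun x => ENNReal.ofReal (x * (lam * Real.exp (-(lam * x))))) x := by
    intro x
    rcases le_or_gt x 0 with hx | hx
    · rw [Set.indicator_of_notMem (by simpa using hx)]
      simp [ENNReal.ofReal_of_nonpos hx]
    · rw [Set.indicator_of_mem (Set.mem_Ioi.2 hx)]
      simp only [Pi.mul_apply]
      rw [gammaPDF_of_nonneg hx.le, ← ENNReal.ofReal_mul (by positivity)]
      congr 1
      rw [Real.Gamma_one]
      rw [show (1:ℝ) - 1 = 0 by ring, Real.rpow_zero, Real.rpow_one]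
      ring
  rw [lintegral_congr hpt, lintegral_indicator measurableSet_Ioi _]
  have hint : IntegrableOn (fun x : ℝ => x * (lam * Real.exp (-(lam * x)))) (Set.Ioi 0) := by
    have h := (integrableOn_rpow_mul_exp_neg_mul_rpow (by norm_num : (-1:ℝ) < 1)
      (by norm_num : (0:ℝ) < 1) hlam).const_mul lam
    refine IntegrableOn.congr_fun (h : IntegrableOn _ _ _) (fun x hx => ?_) measurableSet_Ioi
    simp only [Real.rpow_one]
    ring
  rw [← ofReal_integral_eq_lintegral_ofReal hint]
  · congr 1
    have : ∀ x ∈ Set.Ioi (0:ℝ), x * (lam * Real.exp (-(lam * x)))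
        = lam * (x ^ ((2:ℝ) - 1) * Real.exp (-(lam * x))) := by
      intro x hx
      rw [show (2:ℝ) - 1 = 1 by ring, Real.rpow_one]
      ring
    rw [setIntegral_congr_fun measurableSet_Ioi this, integral_const_mul,
      integral_rpow_mul_exp_neg_mul_Ioi (by norm_num) hlam, Real.Gamma_two]
    field_simp
    rw [Real.rpow_two, ← mul_pow, mul_one_div_cancel hlam.ne', one_pow]
  · refine (ae_restrict_iff' measurableSet_Ioi).2 (ae_of_all _ fun x hx => ?_)
    have : (0:ℝ) < x := hx
    positivity

/-- **Expected road length to bridge a gap (fixed threshold).** Westbound clusters have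
i.i.d. sizes `N 1, N 2, …` with `P(N n > m) = (1 - e^{-λr})^m` and are separated by
i.i.d. exponential(`lam`) distances `I 1, I 2, …`, the two families being independent.
If `M = inf {n ≥ 1 : N n > n₀}` and `B = ∑_{i=1}^{M-1} I i`, then
`E[B] = (1/λ)·((1 - e^{-λr})^{-n₀} - 1)`. -/
theorem expected_road_length_fixed_threshold
    {Ω : Type*} [MeasurableSpace Ω] (P : Measure Ω) [IsProbabilityMeasure P]
    (lam r : ℝ) (hlam : 0 < lam) (hr : 0 < r) (n₀ : ℕ)
    (I : ℕ → Ω → ℝ) (hImeas : ∀ n, Measurable (I n))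
    (hIindep : iIndepFun (fun n ω => I (n + 1) ω) P)
    (hIdist : ∀ n : ℕ, P.map (I (n + 1)) = expMeasure lam)
    (N : ℕ → Ω → ℕ) (hNmeas : ∀ n, Measurable (N n))
    (hNindep : iIndepFun (fun n ω => N (n + 1) ω) P)
    (hNdist : ∀ n m : ℕ,
      P {ω | m < N (n + 1) ω} = ENNReal.ofReal ((1 - Real.exp (-lam * r)) ^ m))
    (hIN : IndepFun (fun ω => fun n : ℕ => I (n + 1) ω)
      (fun ω => fun n : ℕ => N (n + 1) ω) P)
    (M : Ω → ℕ) (hM : ∀ ω, M ω = sInf {n : ℕ | 1 ≤ n ∧ n₀ < N n ω})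
    (B : Ω → ℝ) (hB : ∀ ω, B ω = ∑ i ∈ Finset.Ico 1 (M ω), I i ω) :
    ∫ ω, B ω ∂P =
      (1 / lam) * ((1 - Real.exp (-lam * r)) ^ (-(n₀ : ℤ)) - 1) := by
  have hc0 : 0 < Real.exp (-lam * r) := Real.exp_pos _
  have hc1 : Real.exp (-lam * r) < 1 := by
    rw [Real.exp_lt_one_iff]
    nlinarith
  set q : ℝ := 1 - Real.exp (-lam * r) with hq_def
  have hq0 : 0 < q := by rw [hq_def]; linarith
  have hq1 : q < 1 := by rw [hq_def]; linarith
  set s : ℝ := q ^ n₀ with hs_def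
  have hs0 : 0 < s := pow_pos hq0 n₀
  have hs1 : s ≤ 1 := pow_le_one₀ hq0.le hq1.le
  set t : ℝ := 1 - s with ht_def
  have ht0 : 0 ≤ t := by rw [ht_def]; linarith
  have ht1 : t < 1 := by rw [ht_def]; linarith
  -- basic events
  set D : ℕ → Set Ω := fun n => {ω | N (n + 1) ω ≤ n₀} with hD_def
  have hDmeas : ∀ n, MeasurableSet (D n) := fun n => (hNmeas (n + 1)) measurableSet_Iic
  have hPD : ∀ n, P (D n) = ENNReal.ofReal t := by
    intro n
    have hcompl : D n = {ω | n₀ < N (n + 1) ω}ᶜ := by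
      ext ω; simp [hD_def, not_lt]
    rw [hcompl, prob_compl_eq_one_sub
      (show MeasurableSet {ω | n₀ < N (n + 1) ω} from (hNmeas (n + 1)) measurableSet_Ioi),
      hNdist n n₀,
      ← hs_def, ht_def, ENNReal.ofReal_sub 1 hs0.le, ENNReal.ofReal_one]
  set C : ℕ → Set Ω := fun j => ⋂ n ∈ Finset.range j, D n with hC_def
  have hCmeas : ∀ j, MeasurableSet (C j) :=
    fun j => Finset.measurableSet_biInter _ fun n _ => hDmeas n
  have hPC : ∀ j, P (C j) = ENNReal.ofReal (t ^ j) := by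
    intro j
    have h := hNindep.meas_biInter (S := Finset.range j) (s := D)
      (fun i _ => ⟨Set.Iic n₀, measurableSet_Iic, rfl⟩)
    rw [hC_def]
    rw [h, Finset.prod_congr rfl (fun n _ => hPD n), Finset.prod_const, Finset.card_range,
      ← ENNReal.ofReal_pow ht0]
  set G : Set Ω := ⋂ n, D n with hG_def
  have hGmeas : MeasurableSet G := MeasurableSet.iInter fun n => hDmeas n
  have hPG : P G = 0 := by
    have hle : ∀ j, P G ≤ ENNReal.ofReal (t ^ j) := by
      intro j
      rw [← hPC j]
      exact measure_mono (Set.subset_iInter₂ fun n _ => Set.iInter_subset D n)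
    have htend : Filter.Tendsto (fun j => ENNReal.ofReal (t ^ j)) Filter.atTop (nhds 0) := by
      rw [show (0 : ENNReal) = ENNReal.ofReal 0 by simp]
      exact (ENNReal.continuous_ofReal.tendsto 0).comp
        (tendsto_pow_atTop_nhds_zero_of_lt_one ht0 ht1)
    exact le_antisymm (ge_of_tendsto' htend hle) (by simp)
  -- the key set identity
  have hAeq : ∀ k : ℕ, {ω | k + 1 < M ω} = C (k + 1) ∩ Gᶜ := by
    intro k
    ext ω
    simp only [Set.mem_setOf_eq, Set.mem_inter_iff, Set.mem_compl_iff, hC_def, hG_def, hD_def,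
      Set.mem_iInter, Finset.mem_range]
    constructor
    · intro h
      have hne : {n : ℕ | 1 ≤ n ∧ n₀ < N n ω}.Nonempty := by
        by_contra hemp
        rw [Set.not_nonempty_iff_eq_empty] at hemp
        rw [hM ω, hemp, Nat.sInf_empty] at h
        omega
      constructor
      · intro n hn
        by_contra hgt
        push_neg at hgt
        have hmem : (n + 1) ∈ {n : ℕ | 1 ≤ n ∧ n₀ < N n ω} := ⟨by omega, hgt⟩
        have hle := Nat.sInf_le hmem
        rw [← hM ω] at hle
        omega
      · intro hall
        obtain ⟨n, hn1, hn2⟩ := hne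
        have := hall (n - 1)
        rw [show n - 1 + 1 = n by omega] at this
        omega
    · rintro ⟨hCk, hGk⟩
      push_neg at hGk
      obtain ⟨j, hj⟩ := hGk
      have hne : {n : ℕ | 1 ≤ n ∧ n₀ < N n ω}.Nonempty := ⟨j + 1, by omega, by omega⟩
      have hmem := Nat.sInf_mem hne
      rw [← hM ω] at hmem
      obtain ⟨h1, h2⟩ := hmem
      by_contra hle
      push_neg at hle
      have := hCk (M ω - 1) (by omega)
      rw [show M ω - 1 + 1 = M ω by omega] at this
      omega
  -- a.e. nonnegativity of the I's
  have hInn : ∀ᵐ ω ∂P, ∀ n : ℕ, 0 ≤ I (n + 1) ω := by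
    rw [ae_all_iff]
    intro n
    have h0 : P {ω | I (n + 1) ω < 0} = 0 := by
      have hpre : {ω | I (n + 1) ω < 0} = I (n + 1) ⁻¹' Set.Iio 0 := rfl
      rw [hpre, ← Measure.map_apply (hImeas (n + 1)) measurableSet_Iio, hIdist n,
        expMeasure_Iio_zero]
    refine ae_iff.2 ?_
    simpa [not_le] using h0
  -- the summands
  set F : ℕ → Ω → ENNReal := fun k ω =>
    ({ω' | k + 1 < M ω'}).indicator (fun ω' => ENNReal.ofReal (I (k + 1) ω')) ω with hF_def
  have hFmeas : ∀ k, Measurable (F k) := by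
    intro k
    apply Measurable.indicator (ENNReal.measurable_ofReal.comp (hImeas (k + 1)))
    rw [hAeq k]
    exact (hCmeas (k + 1)).inter hGmeas.compl
  have hpt : ∀ ω, (∀ n, 0 ≤ I (n + 1) ω) → ENNReal.ofReal (B ω) = ∑' k, F k ω := by
    intro ω hω
    have hnn : ∀ i ∈ Finset.Ico 1 (M ω), 0 ≤ I i ω := by
      intro i hi
      obtain ⟨j, rfl⟩ : ∃ j, i = j + 1 := ⟨i - 1, by have := (Finset.mem_Ico.1 hi).1; omega⟩
      exact hω j
    rw [hB ω, ENNReal.ofReal_sum_of_nonneg hnn]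
    have hsupp : ∀ k ∉ Finset.range (M ω - 1), F k ω = 0 := by
      intro k hk
      have hk' : ¬ (k + 1 < M ω) := by simp only [Finset.mem_range] at hk; omega
      simp [hF_def, Set.indicator_apply, hk']
    rw [tsum_eq_sum hsupp, Finset.sum_Ico_eq_sum_range]
    refine Finset.sum_congr rfl fun k hk => ?_
    have hk' : k + 1 < M ω := by simp only [Finset.mem_range] at hk; omega
    simp [hF_def, Set.indicator_apply, hk', add_comm 1 k]
  set g : Ω → ENNReal := fun ω => ∑' k, F k ω with hg_def
  have hgmeas : Measurable g := Measurable.ennreal_tsum hFmeas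
  have hBg : B =ᵐ[P] fun ω => (g ω).toReal := by
    filter_upwards [hInn] with ω hω
    show B ω = (g ω).toReal
    rw [show g ω = ENNReal.ofReal (B ω) from (hpt ω hω).symm, ENNReal.toReal_ofReal]
    rw [hB ω]
    refine Finset.sum_nonneg fun i hi => ?_
    obtain ⟨j, rfl⟩ : ∃ j, i = j + 1 := ⟨i - 1, by have := (Finset.mem_Ico.1 hi).1; omega⟩
    exact hω j
  have hBnn : 0 ≤ᵐ[P] B := by
    filter_upwards [hInn] with ω hω
    rw [Pi.zero_apply, hB ω]
    refine Finset.sum_nonneg fun i hi => ?_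
    obtain ⟨j, rfl⟩ : ∃ j, i = j + 1 := ⟨i - 1, by have := (Finset.mem_Ico.1 hi).1; omega⟩
    exact hω j
  have hBsm : AEStronglyMeasurable B P :=
    (hgmeas.ennreal_toReal.aestronglyMeasurable).congr hBg.symm
  rw [integral_eq_lintegral_of_nonneg_ae hBnn hBsm]
  have hlig : ∫⁻ ω, ENNReal.ofReal (B ω) ∂P = ∑' k, ∫⁻ ω, F k ω ∂P := by
    rw [lintegral_congr_ae (hInn.mono fun ω hω => hpt ω hω),
      lintegral_tsum fun k => (hFmeas k).aemeasurable]
  have hterm : ∀ k, ∫⁻ ω, F k ω ∂P = ENNReal.ofReal (1 / lam) * ENNReal.ofReal (t ^ (k + 1)) := by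
    intro k
    have h1 : F k =ᵐ[P] fun ω => ENNReal.ofReal (I (k + 1) ω) * (C (k + 1)).indicator 1 ω := by
      have hGc : ∀ᵐ ω ∂P, ω ∉ G := measure_eq_zero_iff_ae_notMem.mp hPG
      filter_upwards [hGc] with ω hω
      show ({ω' | k + 1 < M ω'}).indicator (fun ω' => ENNReal.ofReal (I (k + 1) ω')) ω
        = ENNReal.ofReal (I (k + 1) ω) * (C (k + 1)).indicator 1 ω
      by_cases hmem : ω ∈ C (k + 1)
      · have hms : ω ∈ {ω' | k + 1 < M ω'} := by rw [hAeq k]; exact ⟨hmem, hω⟩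
        rw [Set.indicator_of_mem hms, Set.indicator_of_mem hmem]
        simp
      · have hms : ω ∉ {ω' | k + 1 < M ω'} := by rw [hAeq k]; exact fun h => hmem h.1
        rw [Set.indicator_of_notMem hms, Set.indicator_of_notMem hmem]
        simp
    rw [lintegral_congr_ae h1]
    have hS : MeasurableSet {w : ℕ → ℕ | ∀ n ∈ Finset.range (k + 1), w n ≤ n₀} := by
      have hSeq : {w : ℕ → ℕ | ∀ n ∈ Finset.range (k + 1), w n ≤ n₀}
          = ⋂ n ∈ Finset.range (k + 1), {w : ℕ → ℕ | w n ≤ n₀} := by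
        ext w; simp
      rw [hSeq]
      exact Finset.measurableSet_biInter _ fun n _ => measurable_pi_apply n measurableSet_Iic
    have hCpre : C (k + 1) = (fun ω => fun n : ℕ => N (n + 1) ω) ⁻¹'
        {w : ℕ → ℕ | ∀ n ∈ Finset.range (k + 1), w n ≤ n₀} := by
      ext ω; simp [hC_def, hD_def]
    have hfun2 : (C (k + 1)).indicator (1 : Ω → ENNReal)
        = (Set.indicator {w : ℕ → ℕ | ∀ n ∈ Finset.range (k + 1), w n ≤ n₀}
            (1 : (ℕ → ℕ) → ENNReal)) ∘ (fun ω => fun n : ℕ => N (n + 1) ω) := by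
      rw [hCpre]
      funext ω
      by_cases h : ω ∈ (fun ω => fun n : ℕ => N (n + 1) ω) ⁻¹'
          {w : ℕ → ℕ | ∀ n ∈ Finset.range (k + 1), w n ≤ n₀}
      · rw [Set.indicator_of_mem h, Function.comp_apply, Set.indicator_of_mem
          (show (fun n : ℕ => N (n + 1) ω) ∈ {w : ℕ → ℕ | ∀ n ∈ Finset.range (k + 1), w n ≤ n₀}
            from h)]
        rfl
      · rw [Set.indicator_of_notMem h, Function.comp_apply, Set.indicator_of_notMem
          (show (fun n : ℕ => N (n + 1) ω) ∉ {w : ℕ → ℕ | ∀ n ∈ Finset.range (k + 1), w n ≤ n₀}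
            from h)]
    have hindep : IndepFun (fun ω => ENNReal.ofReal (I (k + 1) ω))
        ((C (k + 1)).indicator (1 : Ω → ENNReal)) P := by
      rw [show (fun ω => ENNReal.ofReal (I (k + 1) ω))
            = (fun v : ℕ → ℝ => ENNReal.ofReal (v k)) ∘ (fun ω => fun n : ℕ => I (n + 1) ω)
          from rfl, hfun2]
      exact hIN.comp (ENNReal.measurable_ofReal.comp (measurable_pi_apply k))
        (measurable_const.indicator hS)
    have h2 : ∫⁻ ω, ENNReal.ofReal (I (k + 1) ω) * (C (k + 1)).indicator 1 ω ∂P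
        = (∫⁻ ω, ENNReal.ofReal (I (k + 1) ω) ∂P) * ∫⁻ ω, (C (k + 1)).indicator 1 ω ∂P :=
      lintegral_mul_eq_lintegral_mul_lintegral_of_indepFun
        (ENNReal.measurable_ofReal.comp (hImeas (k + 1)))
        (measurable_const.indicator (hCmeas (k + 1))) hindep
    rw [h2, lintegral_indicator_one (hCmeas (k + 1)), hPC]
    congr 1
    have h3 : ∫⁻ ω, ENNReal.ofReal (I (k + 1) ω) ∂P
        = ∫⁻ x, ENNReal.ofReal x ∂(P.map (I (k + 1))) :=
      (lintegral_map ENNReal.measurable_ofReal (hImeas (k + 1))).symm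
    rw [h3, hIdist k, lintegral_id_expMeasure hlam]
  rw [hlig, tsum_congr hterm]
  have hsum : ∑' k : ℕ, ENNReal.ofReal (1 / lam) * ENNReal.ofReal (t ^ (k + 1))
      = ENNReal.ofReal (1 / lam) * (ENNReal.ofReal t * (ENNReal.ofReal s)⁻¹) := by
    rw [ENNReal.tsum_mul_left]
    congr 1
    calc ∑' k : ℕ, ENNReal.ofReal (t ^ (k + 1))
        = ∑' k : ℕ, ENNReal.ofReal t * ENNReal.ofReal t ^ k := by
          refine tsum_congr fun k => ?_
          rw [pow_succ', ENNReal.ofReal_mul ht0, ENNReal.ofReal_pow ht0]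
      _ = ENNReal.ofReal t * (1 - ENNReal.ofReal t)⁻¹ := by
          rw [ENNReal.tsum_mul_left, ENNReal.tsum_geometric]
      _ = ENNReal.ofReal t * (ENNReal.ofReal s)⁻¹ := by
          congr 2
          rw [← ENNReal.ofReal_one, ← ENNReal.ofReal_sub 1 ht0]
          congr 1
          rw [ht_def]; ring
  rw [hsum, ENNReal.toReal_mul, ENNReal.toReal_mul, ENNReal.toReal_inv,
    ENNReal.toReal_ofReal (by positivity), ENNReal.toReal_ofReal ht0,
    ENNReal.toReal_ofReal hs0.le]
  have hzp : q ^ (-(n₀ : ℤ)) = s⁻¹ := by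
    rw [zpow_neg, zpow_natCast, hs_def]
  rw [hzp, ht_def]
  have hsne : s ≠ 0 := hs0.ne'
  field_simp
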